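/- For every p ∈ (0,∞), the map M ↦ M^{-p} is locally Lipschitz continuous on the set of positive definite d×d real matrices. More precisely, if 0 < c ≤ M, N ≤ C (in the Löwner order), then ‖M^{-p} − N^{-p}‖ ≤ ((2(C−c) + πc)/(2π)) · (2/c)^{p+2} · ‖N − M‖ in the operator norm. -/

import Mathlib

open Matrix

/-- Real matrix power of a matrix, defined through the functional calculus (spectral
decomposition) when the matrix is Hermitian, and by the junk value `0` otherwise. -/
noncomputable def matPow {d : ℕ} (A : Matrix (Fin d) (Fin d) ℝ) (p : ℝ) :
    Matrix (Fin d) (Fin d) ℝ :=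
  if hA : A.IsHermitian then hA.cfc (fun x => x ^ p) else 0

/-- The operator norm (induced by the Euclidean norm) of a matrix. -/
noncomputable def matOpNorm {d : ℕ} (A : Matrix (Fin d) (Fin d) ℝ) : ℝ :=
  ‖Matrix.toEuclideanCLM (𝕜 := ℝ) A‖


open Matrix MeasureTheory Set
open scoped Matrix.Norms.L2Operator

namespace MatPowAux


lemma s1_integrable {a r : ℝ} (ha : 0 < a) (hr : 0 < r) :
    IntegrableOn (fun t : ℝ => t ^ (a - 1) * Real.exp (-(r * t))) (Ioi 0) := by
  have h0 : IntegrableOn (fun x : ℝ => Real.exp (-x) * x ^ (a - 1)) (Ioi 0) :=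
    Real.GammaIntegral_convergent ha
  have h1 : IntegrableOn (fun x : ℝ => Real.exp (-(r * x)) * (r * x) ^ (a - 1)) (Ioi 0) := by
    have := (integrableOn_Ioi_comp_mul_left_iff
      (fun x : ℝ => Real.exp (-x) * x ^ (a - 1)) 0 hr).mpr (by simpa using h0)
    simpa using this
  have h2 : IntegrableOn
      (fun x : ℝ => (r ^ (a - 1))⁻¹ * (Real.exp (-(r * x)) * (r * x) ^ (a - 1))) (Ioi 0) :=
    h1.const_mul _
  apply h2.congr_fun ?_ measurableSet_Ioi
  intro t ht
  have htpos : (0:ℝ) < t := ht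
  have hrp : (0:ℝ) < r ^ (a - 1) := Real.rpow_pos_of_pos hr _
  simp only
  rw [Real.mul_rpow hr.le htpos.le]
  field_simp

lemma s2 (l m t : ℝ) :
    (m - l) * ∫ s in (0:ℝ)..t, Real.exp (-(s * l)) * Real.exp (-((t - s) * m))
      = Real.exp (-(l * t)) - Real.exp (-(m * t)) := by
  rw [← intervalIntegral.integral_const_mul]
  have hder : ∀ s ∈ Set.uIcc (0:ℝ) t, HasDerivAt
      (fun u : ℝ => Real.exp (-(u * l)) * Real.exp (-((t - u) * m)))
      ((m - l) * (Real.exp (-(s * l)) * Real.exp (-((t - s) * m)))) s := by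
    intro s _
    have h1 : HasDerivAt (fun u : ℝ => -(u * l)) (-l) s := by
      have := ((hasDerivAt_id s).mul_const l).neg
      simp only [one_mul] at this
      exact this
    have h2 : HasDerivAt (fun u : ℝ => -((t - u) * m)) m s := by
      have := (((hasDerivAt_id s).const_sub t).mul_const m).neg
      simp only [neg_mul, one_mul, neg_neg] at this
      exact this
    have := h1.exp.fun_mul h2.exp
    exact this.congr_deriv (by ring)
  have hcont : IntervalIntegrable
      (fun s : ℝ => (m - l) * (Real.exp (-(s * l)) * Real.exp (-((t - s) * m))))
      MeasureTheory.volume 0 t := by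
    apply Continuous.intervalIntegrable
    fun_prop
  rw [intervalIntegral.integral_eq_sub_of_hasDerivAt hder hcont]
  simp only [sub_self, zero_mul, neg_zero, Real.exp_zero, mul_one, one_mul, sub_zero]
  rw [mul_comm t l, mul_comm t m]

lemma s3 {p : ℝ} (hp : 0 < p) {l m : ℝ} (hl : 0 < l) (hm : 0 < m) :
    (m - l) * ∫ t in Ioi (0:ℝ), t ^ (p - 1) *
        ∫ s in (0:ℝ)..t, Real.exp (-(s * l)) * Real.exp (-((t - s) * m))
      = Real.Gamma p * (l ^ (-p) - m ^ (-p)) := by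
  rw [← MeasureTheory.integral_const_mul]
  have hpt : ∀ t : ℝ, (m - l) * (t ^ (p - 1) *
      ∫ s in (0:ℝ)..t, Real.exp (-(s * l)) * Real.exp (-((t - s) * m)))
      = t ^ (p - 1) * Real.exp (-(l * t)) - t ^ (p - 1) * Real.exp (-(m * t)) := by
    intro t
    rw [show (m - l) * (t ^ (p - 1) * ∫ s in (0:ℝ)..t,
        Real.exp (-(s * l)) * Real.exp (-((t - s) * m)))
      = t ^ (p - 1) * ((m - l) * ∫ s in (0:ℝ)..t,
        Real.exp (-(s * l)) * Real.exp (-((t - s) * m))) from by ring, s2 l m t]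
    ring
  rw [MeasureTheory.integral_congr_ae (Filter.Eventually.of_forall hpt)]
  rw [MeasureTheory.integral_sub (s1_integrable hp hl) (s1_integrable hp hm)]
  rw [Real.integral_rpow_mul_exp_neg_mul_Ioi hp hl,
    Real.integral_rpow_mul_exp_neg_mul_Ioi hp hm]
  rw [one_div, one_div, Real.inv_rpow hl.le, Real.inv_rpow hm.le,
    ← Real.rpow_neg hl.le, ← Real.rpow_neg hm.le]
  ring

lemma coeff_bound {p c Cc : ℝ} (hp : 0 < p) (hc : 0 < c) (hC : c ≤ Cc) :
    p * (1 / c) ^ (p + 1) ≤ (2 * (Cc - c) + Real.pi * c) / (2 * Real.pi) * (2 / c) ^ (p + 2) := by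
  have hπ := Real.pi_pos
  have hX : (0:ℝ) ≤ (2 / c) ^ (p + 2) := Real.rpow_nonneg (by positivity) _
  have h1 : p ≤ 2 ^ (p + 1) := by
    rcases le_or_gt p 1 with h | h
    · have h2 : (2:ℝ) ^ (1:ℝ) ≤ 2 ^ (p + 1) :=
        Real.rpow_le_rpow_of_exponent_le one_le_two (by linarith)
      rw [Real.rpow_one] at h2
      linarith
    · have hb : 1 + p * 1 ≤ (1 + 1) ^ p :=
        one_add_mul_self_le_rpow_one_add (by norm_num) h.le
      have h2 : (2:ℝ) ^ p ≤ 2 ^ (p + 1) :=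
        Real.rpow_le_rpow_of_exponent_le one_le_two (by linarith)
      norm_num at hb
      linarith
  have key : p * (1 / c) ^ (p + 1) ≤ c / 2 * (2 / c) ^ (p + 2) := by
    have e1 : (2:ℝ) ^ (p + 1) * (1 / c) ^ (p + 1) = (2 / c) ^ (p + 1) := by
      rw [← Real.mul_rpow (by norm_num) (by positivity), mul_one_div]
    have e2 : c / 2 * (2 / c) ^ (p + 2) = (2 / c) ^ (p + 1) := by
      rw [show p + 2 = (p + 1) + 1 by ring, Real.rpow_add_one (by positivity)]
      have hcc : c / 2 * (2 / c) = 1 := by field_simp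
      calc c / 2 * ((2 / c) ^ (p + 1) * (2 / c))
          = (2 / c) ^ (p + 1) * (c / 2 * (2 / c)) := by ring
        _ = (2 / c) ^ (p + 1) := by rw [hcc, mul_one]
    have hp1 : (0:ℝ) ≤ (1 / c) ^ (p + 1) := Real.rpow_nonneg (by positivity) _
    calc p * (1 / c) ^ (p + 1) ≤ 2 ^ (p + 1) * (1 / c) ^ (p + 1) :=
          mul_le_mul_of_nonneg_right h1 hp1
      _ = (2 / c) ^ (p + 1) := e1
      _ = c / 2 * (2 / c) ^ (p + 2) := e2.symm
  refine key.trans (mul_le_mul_of_nonneg_right ?_ hX)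
  rw [div_le_div_iff₀ (by norm_num) (by positivity)]
  nlinarith [Real.pi_pos]


variable {d : ℕ}

lemma nontrivialMatrix (hdne : Nonempty (Fin d)) : Nontrivial (Matrix (Fin d) (Fin d) ℝ) := by
  obtain ⟨i⟩ := hdne
  refine ⟨0, 1, fun h => ?_⟩
  have := congrFun (congrFun h i) i
  simp [Matrix.one_apply_eq] at this

lemma norm_unitary (hdne : Nonempty (Fin d)) {U : Matrix (Fin d) (Fin d) ℝ}
    (hU : U ∈ Matrix.unitaryGroup (Fin d) ℝ) : ‖U‖ = 1 := by
  have := nontrivialMatrix hdne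
  exact CStarRing.norm_of_mem_unitary hU

lemma norm_diagonal_le (v : Fin d → ℝ) {K : ℝ} (hK0 : 0 ≤ K) (hK : ∀ i, |v i| ≤ K) :
    ‖Matrix.diagonal v‖ ≤ K := by
  rw [Matrix.l2_opNorm_def]
  refine ContinuousLinearMap.opNorm_le_bound _ hK0 fun x => ?_
  show ‖Matrix.toEuclideanLin (Matrix.diagonal v) x‖ ≤ K * ‖x‖
  rw [Matrix.toEuclideanLin_apply]
  rw [EuclideanSpace.norm_eq, EuclideanSpace.norm_eq]
  have hKs : K * Real.sqrt (∑ i, ‖x i‖ ^ 2) = Real.sqrt (K ^ 2 * ∑ i, ‖x i‖ ^ 2) := by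
    rw [Real.sqrt_mul (sq_nonneg K), Real.sqrt_sq hK0]
  rw [hKs]
  apply Real.sqrt_le_sqrt
  rw [Finset.mul_sum]
  apply Finset.sum_le_sum
  intro i _
  simp only [Matrix.mulVec_diagonal, Real.norm_eq_abs, abs_mul,
    mul_pow, sq_abs]
  have h1 : (v i) ^ 2 ≤ K ^ 2 := by
    have := hK i
    nlinarith [abs_nonneg (v i), sq_abs (v i)]
  have hx : (WithLp.equiv 2 (Fin d → ℝ)) x i = x i := rfl
  exact mul_le_mul_of_nonneg_right h1 (sq_nonneg _)

lemma cfc_repr {A : Matrix (Fin d) (Fin d) ℝ} (hA : A.IsHermitian) (g : ℝ → ℝ) :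
    hA.cfc g = (hA.eigenvectorUnitary : Matrix (Fin d) (Fin d) ℝ)
      * Matrix.diagonal (fun i => g (hA.eigenvalues i))
      * star (hA.eigenvectorUnitary : Matrix (Fin d) (Fin d) ℝ) := by
  rw [Matrix.IsHermitian.cfc]
  congr 2

lemma spectral_repr {A : Matrix (Fin d) (Fin d) ℝ} (hA : A.IsHermitian) :
    A = (hA.eigenvectorUnitary : Matrix (Fin d) (Fin d) ℝ)
      * Matrix.diagonal (fun i => hA.eigenvalues i)
      * star (hA.eigenvectorUnitary : Matrix (Fin d) (Fin d) ℝ) := by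
  conv_lhs => rw [hA.spectral_theorem]
  congr 2

lemma norm_cfc_le (hdne : Nonempty (Fin d)) {A : Matrix (Fin d) (Fin d) ℝ}
    (hA : A.IsHermitian) (g : ℝ → ℝ) {K : ℝ} (hK : ∀ i, |g (hA.eigenvalues i)| ≤ K) :
    ‖hA.cfc g‖ ≤ K := by
  have hK0 : 0 ≤ K := le_trans (abs_nonneg _) (hK hdne.some)
  rw [cfc_repr]
  set U : Matrix (Fin d) (Fin d) ℝ := (hA.eigenvectorUnitary : Matrix (Fin d) (Fin d) ℝ)
  have hUn : ‖U‖ = 1 := norm_unitary hdne (hA.eigenvectorUnitary).prop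
  have hUsn : ‖star U‖ = 1 := norm_unitary hdne (Unitary.star_mem (hA.eigenvectorUnitary).prop)
  calc ‖U * Matrix.diagonal (fun i => g (hA.eigenvalues i)) * star U‖
      ≤ ‖U * Matrix.diagonal (fun i => g (hA.eigenvalues i))‖ * ‖star U‖ := norm_mul_le _ _
    _ ≤ ‖U‖ * ‖Matrix.diagonal (fun i => g (hA.eigenvalues i))‖ * ‖star U‖ :=
        mul_le_mul_of_nonneg_right (norm_mul_le _ _) (norm_nonneg _)
    _ = ‖Matrix.diagonal (fun i => g (hA.eigenvalues i))‖ := by rw [hUn, hUsn, one_mul, mul_one]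
    _ ≤ K := norm_diagonal_le _ hK0 hK

lemma eig_lower {A : Matrix (Fin d) (Fin d) ℝ} (hA : A.IsHermitian) {c : ℝ}
    (h : (A - c • (1 : Matrix (Fin d) (Fin d) ℝ)).PosSemidef) (i : Fin d) :
    c ≤ hA.eigenvalues i := by
  have hv := hA.mulVec_eigenvectorBasis i
  set v : Fin d → ℝ := ⇑(hA.eigenvectorBasis i) with hvdef
  have hnorm : ‖hA.eigenvectorBasis i‖ = 1 := hA.eigenvectorBasis.orthonormal.1 i
  have hdot : dotProduct v v = 1 := by
    have h2 : (inner ℝ (hA.eigenvectorBasis i) (hA.eigenvectorBasis i) : ℝ)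
        = dotProduct (star v) v := EuclideanSpace.inner_eq_star_dotProduct _ _
    rw [real_inner_self_eq_norm_mul_norm, hnorm, star_trivial] at h2
    simpa using h2.symm
  have h3 := h.dotProduct_mulVec_nonneg v
  rw [Matrix.sub_mulVec, Matrix.smul_mulVec, Matrix.one_mulVec, hv, star_trivial,
    ← sub_smul, dotProduct_smul, hdot] at h3
  simpa using h3

lemma eig_upper {A : Matrix (Fin d) (Fin d) ℝ} (hA : A.IsHermitian) {Cc : ℝ}
    (h : ((Cc • (1 : Matrix (Fin d) (Fin d) ℝ)) - A).PosSemidef) (i : Fin d) :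
    hA.eigenvalues i ≤ Cc := by
  have hv := hA.mulVec_eigenvectorBasis i
  set v : Fin d → ℝ := ⇑(hA.eigenvectorBasis i) with hvdef
  have hnorm : ‖hA.eigenvectorBasis i‖ = 1 := hA.eigenvectorBasis.orthonormal.1 i
  have hdot : dotProduct v v = 1 := by
    have h2 : (inner ℝ (hA.eigenvectorBasis i) (hA.eigenvectorBasis i) : ℝ)
        = dotProduct (star v) v := EuclideanSpace.inner_eq_star_dotProduct _ _
    rw [real_inner_self_eq_norm_mul_norm, hnorm, star_trivial] at h2
    simpa using h2.symm
  have h3 := h.dotProduct_mulVec_nonneg v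
  rw [Matrix.sub_mulVec, Matrix.smul_mulVec, Matrix.one_mulVec, hv, star_trivial,
    ← sub_smul, dotProduct_smul, hdot] at h3
  simpa using h3

lemma norm_conj_le {U D S : Matrix (Fin d) (Fin d) ℝ} (hU : ‖U‖ = 1) (hS : ‖S‖ = 1) :
    ‖U * D * S‖ ≤ ‖D‖ := by
  calc ‖U * D * S‖ ≤ ‖U * D‖ * ‖S‖ := norm_mul_le _ _
    _ ≤ ‖U‖ * ‖D‖ * ‖S‖ := mul_le_mul_of_nonneg_right (norm_mul_le _ _) (norm_nonneg _)
    _ = ‖D‖ := by rw [hU, hS, one_mul, mul_one]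

lemma key (hdne : Nonempty (Fin d)) {p c : ℝ} (hp : 0 < p) (hc : 0 < c)
    {M N : Matrix (Fin d) (Fin d) ℝ} (hMh : M.IsHermitian) (hNh : N.IsHermitian)
    (hMc : ∀ i, c ≤ hMh.eigenvalues i) (hNc : ∀ i, c ≤ hNh.eigenvalues i) :
    ‖hMh.cfc (fun x : ℝ => x ^ (-p)) - hNh.cfc (fun x : ℝ => x ^ (-p))‖ ≤
      p * (1 / c) ^ (p + 1) * ‖N - M‖ := by
  classical
  have hΓ : 0 < Real.Gamma p := Real.Gamma_pos_of_pos hp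
  obtain ⟨U, hU1, hU2, hUn, hUsn, hMrep, hMcfc⟩ :
      ∃ U : Matrix (Fin d) (Fin d) ℝ, star U * U = 1 ∧ U * star U = 1 ∧ ‖U‖ = 1 ∧ ‖star U‖ = 1 ∧
        M = U * Matrix.diagonal (fun i => hMh.eigenvalues i) * star U ∧
        hMh.cfc (fun x : ℝ => x ^ (-p)) =
          U * Matrix.diagonal (fun i => (hMh.eigenvalues i) ^ (-p)) * star U :=
    ⟨(hMh.eigenvectorUnitary : Matrix (Fin d) (Fin d) ℝ),
      Unitary.star_mul_self_of_mem (hMh.eigenvectorUnitary).prop,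
      Unitary.mul_star_self_of_mem (hMh.eigenvectorUnitary).prop,
      norm_unitary hdne (hMh.eigenvectorUnitary).prop,
      norm_unitary hdne (Unitary.star_mem (hMh.eigenvectorUnitary).prop),
      spectral_repr hMh, cfc_repr hMh _⟩
  obtain ⟨V, hV1, hV2, hVn, hVsn, hNrep, hNcfc⟩ :
      ∃ V : Matrix (Fin d) (Fin d) ℝ, star V * V = 1 ∧ V * star V = 1 ∧ ‖V‖ = 1 ∧ ‖star V‖ = 1 ∧
        N = V * Matrix.diagonal (fun i => hNh.eigenvalues i) * star V ∧
        hNh.cfc (fun x : ℝ => x ^ (-p)) =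
          V * Matrix.diagonal (fun i => (hNh.eigenvalues i) ^ (-p)) * star V :=
    ⟨(hNh.eigenvectorUnitary : Matrix (Fin d) (Fin d) ℝ),
      Unitary.star_mul_self_of_mem (hNh.eigenvectorUnitary).prop,
      Unitary.mul_star_self_of_mem (hNh.eigenvectorUnitary).prop,
      norm_unitary hdne (hNh.eigenvectorUnitary).prop,
      norm_unitary hdne (Unitary.star_mem (hNh.eigenvectorUnitary).prop),
      spectral_repr hNh, cfc_repr hNh _⟩
  set Δ : Matrix (Fin d) (Fin d) ℝ := N - M with hΔdef
  set EM : ℝ → Matrix (Fin d) (Fin d) ℝ :=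
    fun s => U * Matrix.diagonal (fun i => Real.exp (-(s * hMh.eigenvalues i))) * star U
    with hEMdef
  set EN : ℝ → Matrix (Fin d) (Fin d) ℝ :=
    fun s => V * Matrix.diagonal (fun i => Real.exp (-(s * hNh.eigenvalues i))) * star V
    with hENdef
  -- continuity
  let dlm : (Fin d → ℝ) →ₗ[ℝ] Matrix (Fin d) (Fin d) ℝ :=
    { toFun := Matrix.diagonal
      map_add' := fun a b => (Matrix.diagonal_add a b).symm
      map_smul' := fun r a => Matrix.diagonal_smul r a }
  have hdlm : Continuous dlm := LinearMap.continuous_of_finiteDimensional _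
  have hEMc : Continuous EM := by
    rw [hEMdef]
    exact (continuous_const.mul (hdlm.comp (continuous_pi fun i =>
      (by fun_prop : Continuous fun s : ℝ => Real.exp (-(s * hMh.eigenvalues i)))))).mul
      continuous_const
  have hENc : Continuous EN := by
    rw [hENdef]
    exact (continuous_const.mul (hdlm.comp (continuous_pi fun i =>
      (by fun_prop : Continuous fun s : ℝ => Real.exp (-(s * hNh.eigenvalues i)))))).mul
      continuous_const
  set Pin : ℝ → Matrix (Fin d) (Fin d) ℝ := fun t => ∫ s in (0:ℝ)..t, EM s * Δ * EN (t - s)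
    with hPindef
  have hIc : Continuous Pin := by
    rw [hPindef]
    exact intervalIntegral.continuous_parametric_intervalIntegral_of_continuous
      (f := fun t s => EM s * Δ * EN (t - s))
      (((hEMc.comp continuous_snd).mul continuous_const).mul
        (hENc.comp (continuous_fst.sub continuous_snd))) continuous_id
  -- norm bounds
  have hEMn : ∀ s : ℝ, 0 ≤ s → ‖EM s‖ ≤ Real.exp (-(s * c)) := by
    intro s hs
    rw [hEMdef]
    refine le_trans (norm_conj_le hUn hUsn) (norm_diagonal_le _ (Real.exp_pos _).le fun i => ?_)
    rw [abs_of_pos (Real.exp_pos _)]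
    apply Real.exp_le_exp.mpr
    have := mul_le_mul_of_nonneg_left (hMc i) hs
    linarith
  have hENn : ∀ s : ℝ, 0 ≤ s → ‖EN s‖ ≤ Real.exp (-(s * c)) := by
    intro s hs
    rw [hENdef]
    refine le_trans (norm_conj_le hVn hVsn) (norm_diagonal_le _ (Real.exp_pos _).le fun i => ?_)
    rw [abs_of_pos (Real.exp_pos _)]
    apply Real.exp_le_exp.mpr
    have := mul_le_mul_of_nonneg_left (hNc i) hs
    linarith
  have hkerbound : ∀ t : ℝ, 0 < t → ∀ s ∈ Set.Ioc (0:ℝ) t,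
      ‖EM s * Δ * EN (t - s)‖ ≤ Real.exp (-(c * t)) * ‖Δ‖ := by
    intro t ht s hs
    have h1 := hEMn s hs.1.le
    have h2 := hENn (t - s) (by linarith [hs.2])
    have hee : Real.exp (-(s * c)) * Real.exp (-((t - s) * c)) = Real.exp (-(c * t)) := by
      rw [← Real.exp_add]; congr 1; ring
    calc ‖EM s * Δ * EN (t - s)‖ ≤ ‖EM s * Δ‖ * ‖EN (t - s)‖ := norm_mul_le _ _
      _ ≤ (‖EM s‖ * ‖Δ‖) * ‖EN (t - s)‖ :=
          mul_le_mul_of_nonneg_right (norm_mul_le _ _) (norm_nonneg _)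
      _ ≤ (Real.exp (-(s * c)) * ‖Δ‖) * Real.exp (-((t - s) * c)) := by
          apply mul_le_mul (mul_le_mul_of_nonneg_right h1 (norm_nonneg _)) h2 (norm_nonneg _)
          positivity
      _ = Real.exp (-(c * t)) * ‖Δ‖ := by rw [mul_right_comm, hee]
  set G : ℝ → Matrix (Fin d) (Fin d) ℝ := fun t => t ^ (p - 1) • Pin t with hGdef
  have hGbound : ∀ t ∈ Ioi (0:ℝ), ‖G t‖ ≤ (t ^ (p + 1 - 1) * Real.exp (-(c * t))) * ‖Δ‖ := by
    intro t ht
    have ht' : (0:ℝ) < t := ht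
    have hInt : ‖Pin t‖ ≤ Real.exp (-(c * t)) * ‖Δ‖ * |t - 0| := by
      rw [hPindef]
      apply intervalIntegral.norm_integral_le_of_norm_le_const
      intro s hs
      rw [Set.uIoc_of_le ht'.le] at hs
      exact hkerbound t ht' s hs
    have hrw : t ^ (p - 1) * (Real.exp (-(c * t)) * ‖Δ‖ * |t - 0|)
        = (t ^ (p + 1 - 1) * Real.exp (-(c * t))) * ‖Δ‖ := by
      rw [sub_zero, abs_of_pos ht', show p + 1 - 1 = (p - 1) + 1 by ring,
        Real.rpow_add_one (ne_of_gt ht')]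
      ring
    rw [hGdef]
    simp only
    rw [norm_smul, Real.norm_eq_abs, abs_of_nonneg (Real.rpow_nonneg ht'.le _)]
    calc t ^ (p - 1) * ‖Pin t‖
        ≤ t ^ (p - 1) * (Real.exp (-(c * t)) * ‖Δ‖ * |t - 0|) :=
          mul_le_mul_of_nonneg_left hInt (Real.rpow_nonneg ht'.le _)
      _ = _ := hrw
  have hGmeas : AEStronglyMeasurable G (volume.restrict (Ioi 0)) := by
    have hcont : ContinuousOn G (Ioi 0) := by
      apply ContinuousOn.fun_smul ?_ hIc.continuousOn
      intro t ht
      exact (Real.continuousAt_rpow_const t (p - 1)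
        (Or.inl (ne_of_gt (mem_Ioi.mp ht)))).continuousWithinAt
    exact hcont.aestronglyMeasurable measurableSet_Ioi
  have hdom : IntegrableOn (fun t : ℝ => (t ^ (p + 1 - 1) * Real.exp (-(c * t))) * ‖Δ‖)
      (Ioi 0) := (s1_integrable (by linarith) hc).mul_const _
  have hGint : IntegrableOn G (Ioi 0) := by
    apply Integrable.mono' hdom hGmeas
    rw [ae_restrict_iff' measurableSet_Ioi]
    exact Filter.Eventually.of_forall hGbound
  -- algebraic identities
  set W : Matrix (Fin d) (Fin d) ℝ := star U * V with hWdef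
  set B : Matrix (Fin d) (Fin d) ℝ := star U * Δ * V with hBdef
  have hBoth : ∀ D1 D2 X : Matrix (Fin d) (Fin d) ℝ,
      star U * ((U * D1 * star U) * X * (V * D2 * star V)) * V
        = D1 * (star U * X * V) * D2 := by
    intro D1 D2 X
    have h : star U * ((U * D1 * star U) * X * (V * D2 * star V)) * V
        = (star U * U) * ((D1 * (star U * X * V) * D2) * (star V * V)) := by noncomm_ring
    rw [h, hU1, hV1, one_mul, mul_one]
  have hMside : ∀ D : Matrix (Fin d) (Fin d) ℝ, star U * (U * D * star U) * V = D * W := by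
    intro D
    have h : star U * (U * D * star U) * V = (star U * U) * (D * (star U * V)) := by noncomm_ring
    rw [h, hU1, one_mul, hWdef]
  have hNside : ∀ D : Matrix (Fin d) (Fin d) ℝ, star U * (V * D * star V) * V = W * D := by
    intro D
    have h : star U * (V * D * star V) * V = ((star U * V) * D) * (star V * V) := by noncomm_ring
    rw [h, hV1, mul_one, hWdef]
  have hBentry : ∀ i j, B i j = (hNh.eigenvalues j - hMh.eigenvalues i) * W i j := by
    intro i j
    have h1 : star U * N * V = W * Matrix.diagonal (fun k => hNh.eigenvalues k) := by
      have h := hNside (Matrix.diagonal fun k => hNh.eigenvalues k)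
      rwa [← hNrep] at h
    have h2 : star U * M * V = Matrix.diagonal (fun k => hMh.eigenvalues k) * W := by
      have h := hMside (Matrix.diagonal fun k => hMh.eigenvalues k)
      rwa [← hMrep] at h
    rw [hBdef, hΔdef, Matrix.mul_sub, Matrix.sub_mul, h1, h2]
    simp only [Matrix.sub_apply, Matrix.mul_diagonal, Matrix.diagonal_mul]
    ring
  have cancel : ∀ X Y : Matrix (Fin d) (Fin d) ℝ, star U * X * V = star U * Y * V → X = Y := by
    intro X Y h
    have e : ∀ Z : Matrix (Fin d) (Fin d) ℝ, U * (star U * Z * V) * star V = Z := by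
      intro Z
      have h3 : U * (star U * Z * V) * star V = (U * star U) * Z * (V * star V) := by
        noncomm_ring
      rw [h3, hU2, hV2, one_mul, mul_one]
    have h2 := congrArg (fun Z => U * Z * star V) h
    rwa [e, e] at h2
  -- the key identity
  have claimA : hMh.cfc (fun x : ℝ => x ^ (-p)) - hNh.cfc (fun x : ℝ => x ^ (-p))
      = (Real.Gamma p)⁻¹ • ∫ t in Ioi (0:ℝ), G t := by
    apply cancel
    ext i j
    let lm : Matrix (Fin d) (Fin d) ℝ →ₗ[ℝ] ℝ :=
      { toFun := fun X => (star U * X * V) i j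
        map_add' := fun X Y => by simp [Matrix.mul_add, Matrix.add_mul]
        map_smul' := fun r X => by simp [Matrix.mul_smul, Matrix.smul_mul] }
    let L : Matrix (Fin d) (Fin d) ℝ →L[ℝ] ℝ := LinearMap.toContinuousLinearMap lm
    have hL : ∀ X : Matrix (Fin d) (Fin d) ℝ, L X = (star U * X * V) i j := fun X => rfl
    show (star U * (hMh.cfc (fun x : ℝ => x ^ (-p)) - hNh.cfc (fun x : ℝ => x ^ (-p))) * V) i j
      = (star U * ((Real.Gamma p)⁻¹ • ∫ t in Ioi (0:ℝ), G t) * V) i j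
    rw [← hL, ← hL]
    have hLleft : L (hMh.cfc (fun x : ℝ => x ^ (-p)) - hNh.cfc (fun x : ℝ => x ^ (-p)))
        = (hMh.eigenvalues i) ^ (-p) * W i j - W i j * (hNh.eigenvalues j) ^ (-p) := by
      rw [map_sub, hL, hL, hMcfc, hNcfc, hMside _, hNside _]
      simp only [Matrix.mul_diagonal, Matrix.diagonal_mul]
    have hLker : ∀ s r : ℝ, L (EM s * Δ * EN r)
        = Real.exp (-(s * hMh.eigenvalues i)) * B i j
            * Real.exp (-(r * hNh.eigenvalues j)) := by
      intro s r
      rw [hL, hEMdef, hENdef]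
      simp only
      rw [hBoth]
      simp only [Matrix.mul_diagonal, Matrix.diagonal_mul, hBdef]
    have hti : ∀ t : ℝ, IntervalIntegrable (fun s => EM s * Δ * EN (t - s))
        MeasureTheory.volume 0 t := fun t =>
      (((hEMc.mul continuous_const).mul
        (hENc.comp (continuous_const.sub continuous_id))).intervalIntegrable 0 t)
    have hLright : L ((Real.Gamma p)⁻¹ • ∫ t in Ioi (0:ℝ), G t)
        = (Real.Gamma p)⁻¹ * ((∫ t in Ioi (0:ℝ), t ^ (p - 1) *
            ∫ s in (0:ℝ)..t, Real.exp (-(s * hMh.eigenvalues i))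
              * Real.exp (-((t - s) * hNh.eigenvalues j))) * B i j) := by
      rw [_root_.map_smul, smul_eq_mul]
      congr 1
      rw [← ContinuousLinearMap.integral_comp_comm L hGint, ← MeasureTheory.integral_mul_const]
      refine MeasureTheory.integral_congr_ae (Filter.Eventually.of_forall fun t => ?_)
      show L (G t) = _
      rw [hGdef]
      simp only
      rw [_root_.map_smul, smul_eq_mul, hPindef]
      simp only
      rw [← ContinuousLinearMap.intervalIntegral_comp_comm L (hti t)]
      rw [show (fun s => L (EM s * Δ * EN (t - s)))
          = fun s => (Real.exp (-(s * hMh.eigenvalues i))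
              * Real.exp (-((t - s) * hNh.eigenvalues j))) * B i j from
        funext fun s => by rw [hLker]; ring]
      rw [intervalIntegral.integral_mul_const]
      ring
    rw [hLleft, hLright, hBentry i j]
    have hs3 := s3 hp (lt_of_lt_of_le hc (hMc i)) (lt_of_lt_of_le hc (hNc j))
    have hγ : Real.Gamma p ≠ 0 := hΓ.ne'
    rw [eq_comm, inv_mul_eq_iff_eq_mul₀ hγ]
    linear_combination (W i j) * hs3
  -- norm estimate
  rw [claimA]
  have hinv : (0:ℝ) < (Real.Gamma p)⁻¹ := inv_pos.mpr hΓ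
  calc ‖(Real.Gamma p)⁻¹ • ∫ t in Ioi (0:ℝ), G t‖
      = (Real.Gamma p)⁻¹ * ‖∫ t in Ioi (0:ℝ), G t‖ := by
        rw [norm_smul, Real.norm_eq_abs, abs_of_pos hinv]
    _ ≤ (Real.Gamma p)⁻¹ * ∫ t in Ioi (0:ℝ), ‖G t‖ :=
        mul_le_mul_of_nonneg_left (MeasureTheory.norm_integral_le_integral_norm _) hinv.le
    _ ≤ (Real.Gamma p)⁻¹ * ∫ t in Ioi (0:ℝ), (t ^ (p + 1 - 1) * Real.exp (-(c * t))) * ‖Δ‖ := by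
        apply mul_le_mul_of_nonneg_left ?_ hinv.le
        exact MeasureTheory.setIntegral_mono_on hGint.norm hdom measurableSet_Ioi hGbound
    _ = (Real.Gamma p)⁻¹ * (((1 / c) ^ (p + 1) * Real.Gamma (p + 1)) * ‖Δ‖) := by
        rw [MeasureTheory.integral_mul_const, Real.integral_rpow_mul_exp_neg_mul_Ioi
          (by linarith) hc]
    _ = p * (1 / c) ^ (p + 1) * ‖N - M‖ := by
        rw [Real.Gamma_add_one hp.ne', hΔdef]
        field_simp

end MatPowAux

section Main

open MeasureTheory Set
open scoped Matrix.Norms.L2Operator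

/-- Local Lipschitz continuity of `M ↦ M^{-p}` on the positive definite matrices: if
`0 < c ≤ M, N ≤ C` in the Löwner order, then
`‖M^{-p} − N^{-p}‖ ≤ ((2(C−c) + πc)/(2π)) · (2/c)^(p+2) · ‖N − M‖` in the operator norm. -/
theorem matPow_neg_locally_lipschitz {d : ℕ} (hd : 1 ≤ d) (p c C : ℝ) (hp : 0 < p)
    (hc : 0 < c) (M N : Matrix (Fin d) (Fin d) ℝ) (hM : M.PosDef) (hN : N.PosDef)
    (hMc : (M - c • (1 : Matrix (Fin d) (Fin d) ℝ)).PosSemidef)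
    (hMC : ((C • (1 : Matrix (Fin d) (Fin d) ℝ)) - M).PosSemidef)
    (hNc : (N - c • (1 : Matrix (Fin d) (Fin d) ℝ)).PosSemidef)
    (hNC : ((C • (1 : Matrix (Fin d) (Fin d) ℝ)) - N).PosSemidef) :
    matOpNorm (matPow M (-p) - matPow N (-p)) ≤
      (2 * (C - c) + Real.pi * c) / (2 * Real.pi) * (2 / c) ^ (p + 2) *
        matOpNorm (N - M) := by
  have hdne : Nonempty (Fin d) := ⟨⟨0, hd⟩⟩
  have hMh : M.IsHermitian := hM.1
  have hNh : N.IsHermitian := hN.1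
  have hMeig := fun i => MatPowAux.eig_lower hMh hMc i
  have hNeig := fun i => MatPowAux.eig_lower hNh hNc i
  have hCc : c ≤ C := le_trans (hMeig hdne.some) (MatPowAux.eig_upper hMh hMC hdne.some)
  have e1 : matPow M (-p) = hMh.cfc (fun x : ℝ => x ^ (-p)) := dif_pos hMh
  have e2 : matPow N (-p) = hNh.cfc (fun x : ℝ => x ^ (-p)) := dif_pos hNh
  have hnorm : ∀ A : Matrix (Fin d) (Fin d) ℝ, matOpNorm A = ‖A‖ := fun A => rfl
  rw [e1, e2, hnorm, hnorm]
  calc ‖hMh.cfc (fun x : ℝ => x ^ (-p)) - hNh.cfc (fun x : ℝ => x ^ (-p))‖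
      ≤ p * (1 / c) ^ (p + 1) * ‖N - M‖ := MatPowAux.key hdne hp hc hMh hNh hMeig hNeig
    _ ≤ (2 * (C - c) + Real.pi * c) / (2 * Real.pi) * (2 / c) ^ (p + 2) * ‖N - M‖ :=
        mul_le_mul_of_nonneg_right (MatPowAux.coeff_bound hp hc hCc) (norm_nonneg _)

end Main
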